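/- (Proposition 2) Let N' be a positive even integer and L = 2N' + 2. Let a, b be unimodular complex sequences of length L whose aperiodic autocorrelation sum satisfies ρ_a(τ) + ρ_b(τ) = 0 for every τ with 1 ≤ τ ≤ 3N'/2 and for τ = 2N' + 1, and |ρ_a(τ) + ρ_b(τ)| ≤ 4 for every τ with 3N'/2 < τ ≤ 2N'. Let x, y be unimodular complex sequences of length N, and define four L×N complex arrays by X₁[i,j] = a_i·x_j, X₂[i,j] = b_i·y_j, X₃[i,j] = −a_i·conj(y_{N-1-j}), and X₄[i,j] = b_i·conj(x_{N-1-j}). Then every column sequence of each X_m (m ∈ {1,2,3,4}) has PMEPR strictly less than 4. -/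

import Mathlib

open Finset

noncomputable section

/-- 1D aperiodic autocorrelation of a length-`N` complex sequence at integer shift `τ`:
`ρ_x(τ) = Σ x_j * conj (x_{j+τ})`, summed over all `j` with `j` and `j + τ` in `[0, N)`. -/
def acorr (N : ℕ) (x : ℕ → ℂ) (τ : ℤ) : ℂ :=
  ∑ j ∈ Finset.range N,
    if 0 ≤ (j : ℤ) + τ ∧ (j : ℤ) + τ < (N : ℤ) then
      x j * star (x ((j : ℤ) + τ).toNat)
    else 0

/-- 2D aperiodic autocorrelation of an `N₁ × N₂` complex array at integer shifts `(τ₁, τ₂)`. -/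
def acorr2 (N₁ N₂ : ℕ) (X : ℕ → ℕ → ℂ) (τ₁ τ₂ : ℤ) : ℂ :=
  ∑ i ∈ Finset.range N₁, ∑ j ∈ Finset.range N₂,
    if (0 ≤ (i : ℤ) + τ₁ ∧ (i : ℤ) + τ₁ < (N₁ : ℤ)) ∧
       (0 ≤ (j : ℤ) + τ₂ ∧ (j : ℤ) + τ₂ < (N₂ : ℤ)) then
      X i j * star (X ((i : ℤ) + τ₁).toNat ((j : ℤ) + τ₂).toNat)
    else 0

/-- Peak-to-mean envelope power ratio of a length-`L` complex sequence:
`sup_{t ∈ [0,1]} (1/L) * |Σ_{i<L} c_i exp(2π√-1 i t)|²`. -/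
def pmepr (L : ℕ) (c : ℕ → ℂ) : ℝ :=
  ⨆ t : Set.Icc (0 : ℝ) 1,
    (Norm.norm (∑ i ∈ Finset.range L,
      c i * Complex.exp (2 * Real.pi * Complex.I * (i : ℂ) * ((t : ℝ) : ℂ)))) ^ 2 / L

def rho (L : ℕ) (c : ℕ → ℂ) (τ : ℤ) : ℂ :=
  ∑ p ∈ (Finset.range L ×ˢ Finset.range L).filter (fun p => (p.2 : ℤ) - (p.1 : ℤ) = τ),
    c p.1 * star (c p.2)

lemma acorr_eq (L : ℕ) (c : ℕ → ℂ) (τ : ℤ) : acorr L c τ = rho L c τ := by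
  unfold acorr rho
  rw [Finset.sum_filter, Finset.sum_product]
  refine Finset.sum_congr rfl fun j hj => ?_
  simp only [Finset.mem_range] at hj
  by_cases h : 0 ≤ (j:ℤ) + τ ∧ (j:ℤ) + τ < (L:ℤ)
  · rw [if_pos h]
    have hk : ((j:ℤ)+τ).toNat ∈ Finset.range L := by
      simp only [Finset.mem_range]; omega
    rw [Finset.sum_eq_single_of_mem _ hk]
    · rw [if_pos (by omega)]
    · intro k hk' hne
      rw [if_neg]
      intro hc
      apply hne
      simp only [Finset.mem_range] at hk'
      omega
  · rw [if_neg h, Finset.sum_eq_zero]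
    intro k hk'
    simp only [Finset.mem_range] at hk'
    rw [if_neg]; omega
lemma rho_neg (L : ℕ) (c : ℕ → ℂ) (τ : ℤ) : rho L c (-τ) = star (rho L c τ) := by
  unfold rho
  rw [star_sum]
  refine Finset.sum_nbij' (fun p => p.swap) (fun p => p.swap) ?_ ?_ ?_ ?_ ?_
  · intro p hp
    simp only [Finset.mem_filter, Finset.mem_product] at hp ⊢
    exact ⟨⟨hp.1.2, hp.1.1⟩, by have := hp.2; simp [Prod.swap] at *; omega⟩
  · intro p hp
    simp only [Finset.mem_filter, Finset.mem_product] at hp ⊢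
    exact ⟨⟨hp.1.2, hp.1.1⟩, by have := hp.2; simp [Prod.swap] at *; omega⟩
  · intro p _; simp
  · intro p _; simp
  · intro p _
    simp [Prod.swap, mul_comm]

lemma acorr_self (L : ℕ) (c : ℕ → ℂ) (h : ∀ i < L, Norm.norm (c i) = 1) :
    acorr L c 0 = (L : ℂ) := by
  unfold acorr
  have key : ∀ j ∈ Finset.range L,
      (if 0 ≤ (j:ℤ) + 0 ∧ (j:ℤ) + 0 < (L:ℤ) then c j * star (c ((j:ℤ) + 0).toNat) else 0) = 1 := by
    intro j hj
    simp only [Finset.mem_range] at hj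
    rw [if_pos (by omega)]
    show c j * (starRingEnd ℂ) (c ((j:ℤ) + 0).toNat) = 1
    have : ((j:ℤ) + 0).toNat = j := by omega
    rw [this, Complex.mul_conj, Complex.normSq_eq_norm_sq, h j hj]
    norm_num
  rw [Finset.sum_congr rfl key, Finset.sum_const, Finset.card_range]
  simp
def E (t : ℝ) (n : ℤ) : ℂ := Complex.exp (2 * Real.pi * Complex.I * n * t)

lemma E_abs (t : ℝ) (n : ℤ) : ‖E t n‖ = 1 := by
  unfold E
  rw [show (2 * Real.pi * Complex.I * n * t : ℂ)
      = ((2 * Real.pi * n * t : ℝ) : ℂ) * Complex.I by push_cast; ring]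
  exact Complex.norm_exp_ofReal_mul_I _

lemma E_mul (t : ℝ) (m n : ℤ) : E t m * E t n = E t (m + n) := by
  unfold E
  rw [← Complex.exp_add]
  congr 1
  push_cast
  ring

lemma E_star (t : ℝ) (n : ℤ) : star (E t n) = E t (-n) := by
  unfold E
  show (starRingEnd ℂ) _ = _
  rw [← Complex.exp_conj]
  congr 1
  simp only [map_mul, Complex.conj_I, Complex.conj_ofReal, map_ofNat, map_intCast]
  push_cast
  ring

lemma decomp (L : ℕ) (c : ℕ → ℂ) (t : ℝ) :
    (∑ i ∈ Finset.range L, c i * E t i) * star (∑ i ∈ Finset.range L, c i * E t i)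
      = ∑ τ ∈ Finset.Icc (1 - (L:ℤ)) ((L:ℤ) - 1), rho L c τ * E t (-τ) := by
  have maps : ∀ p ∈ Finset.range L ×ˢ Finset.range L,
      ((p.2 : ℤ) - (p.1 : ℤ)) ∈ Finset.Icc (1 - (L:ℤ)) ((L:ℤ) - 1) := by
    intro p hp
    simp only [Finset.mem_product, Finset.mem_range] at hp
    simp only [Finset.mem_Icc]
    omega
  have step1 : (∑ i ∈ Finset.range L, c i * E t i) * star (∑ i ∈ Finset.range L, c i * E t i)
      = ∑ p ∈ Finset.range L ×ˢ Finset.range L,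
          c p.1 * star (c p.2) * E t ((p.1:ℤ) - (p.2:ℤ)) := by
    rw [star_sum, Finset.sum_mul_sum, ← Finset.sum_product']
    refine Finset.sum_congr rfl fun p _ => ?_
    rw [star_mul', E_star]
    rw [show c p.1 * E t p.1 * (star (c p.2) * E t (-(p.2:ℤ)))
        = c p.1 * star (c p.2) * (E t p.1 * E t (-(p.2:ℤ))) by ring, E_mul,
      ← Int.sub_eq_add_neg]
  rw [step1,
    ← Finset.sum_fiberwise_of_maps_to maps (fun p => c p.1 * star (c p.2) * E t ((p.1:ℤ) - (p.2:ℤ)))]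
  refine Finset.sum_congr rfl fun τ _ => ?_
  unfold rho
  rw [Finset.sum_mul]
  refine Finset.sum_congr rfl fun p hp => ?_
  simp only [Finset.mem_filter] at hp
  rw [show (p.1:ℤ) - (p.2:ℤ) = -τ by omega]

/-- Proposition 2: with `L = 2N' + 2` for a positive even `N'`, and a
unimodular pair `(a, b)` whose autocorrelation sum vanishes for `1 ≤ τ ≤ 3N'/2` and at
`τ = 2N' + 1`, and is bounded in modulus by `4` for `3N'/2 < τ ≤ 2N'`, every column
sequence of each of the four arrays has PMEPR strictly less than `4`. -/
theorem stmt_10 (N' N : ℕ) (hpos : 0 < N') (heven : Even N')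
    (L : ℕ) (hL : L = 2 * N' + 2)
    (a b x y : ℕ → ℂ)
    (ha : ∀ i < L, Norm.norm (a i) = 1) (hb : ∀ i < L, Norm.norm (b i) = 1)
    (hx : ∀ j < N, Norm.norm (x j) = 1) (hy : ∀ j < N, Norm.norm (y j) = 1)
    (hzero₁ : ∀ τ : ℤ, 1 ≤ τ → 2 * τ ≤ 3 * (N' : ℤ) → acorr L a τ + acorr L b τ = 0)
    (hzero₂ : acorr L a (2 * (N' : ℤ) + 1) + acorr L b (2 * (N' : ℤ) + 1) = 0)
    (hbd : ∀ τ : ℤ, 3 * (N' : ℤ) < 2 * τ → τ ≤ 2 * (N' : ℤ) →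
      Norm.norm (acorr L a τ + acorr L b τ) ≤ 4) :
    ∀ j < N,
      pmepr L (fun i => a i * x j) < 4 ∧
      pmepr L (fun i => b i * y j) < 4 ∧
      pmepr L (fun i => -(a i * star (y (N - 1 - j)))) < 4 ∧
      pmepr L (fun i => b i * star (x (N - 1 - j))) < 4 := by
  obtain ⟨M, hM⟩ := heven
  have hLi : (L:ℤ) = 4*M+2 := by push_cast; omega
  have hLpos : 0 < L := by omega
  set g : ℤ → ℝ := fun τ => Norm.norm (acorr L a τ + acorr L b τ) with hg
  have gsymm : ∀ τ : ℤ, g (-τ) = g τ := by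
    intro τ
    simp only [hg, acorr_eq, rho_neg, ← star_add]
    exact Complex.norm_conj _
  have g0 : g 0 = 2 * L := by
    simp only [hg]
    rw [acorr_self L a ha, acorr_self L b hb,
      show ((L:ℂ) + L) = ((2*(L:ℝ) : ℝ) : ℂ) by push_cast; ring, Complex.norm_real, Real.norm_eq_abs]
    rw [abs_of_nonneg (by positivity)]
  have hpos_sum : ∑ τ ∈ Finset.Icc (1:ℤ) ((L:ℤ)-1), g τ ≤ 4 * M := by
    have hb1 : ∀ τ ∈ Finset.Icc (1:ℤ) ((L:ℤ)-1),
        g τ ≤ (if 3*(M:ℤ) < τ ∧ τ ≤ 4*(M:ℤ) then (4:ℝ) else 0) := by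
      intro τ hτ
      simp only [Finset.mem_Icc] at hτ
      by_cases h1 : 2*τ ≤ 3*(N':ℤ)
      · have hz : g τ = 0 := by simp [hg, hzero₁ τ hτ.1 h1]
        rw [hz]; split <;> norm_num
      · by_cases h2 : τ ≤ 2*(N':ℤ)
        · rw [if_pos (by omega)]
          exact hbd τ (by omega) h2
        · have hτ2 : τ = 2*(N':ℤ)+1 := by omega
          have hz : g τ = 0 := by rw [hg]; simp only [hτ2, hzero₂, norm_zero]
          rw [hz, if_neg (by omega)]
    calc ∑ τ ∈ Finset.Icc (1:ℤ) ((L:ℤ)-1), g τ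
        ≤ ∑ τ ∈ Finset.Icc (1:ℤ) ((L:ℤ)-1),
            (if 3*(M:ℤ) < τ ∧ τ ≤ 4*(M:ℤ) then (4:ℝ) else 0) := Finset.sum_le_sum hb1
      _ = ∑ τ ∈ (Finset.Icc (1:ℤ) ((L:ℤ)-1)).filter (fun τ => 3*(M:ℤ) < τ ∧ τ ≤ 4*(M:ℤ)), (4:ℝ) :=
          (Finset.sum_filter _ _).symm
      _ = 4 * M := by
          have hfe : (Finset.Icc (1:ℤ) ((L:ℤ)-1)).filter (fun τ => 3*(M:ℤ) < τ ∧ τ ≤ 4*(M:ℤ))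
              = Finset.Icc (3*(M:ℤ)+1) (4*(M:ℤ)) := by
            ext τ
            simp only [Finset.mem_filter, Finset.mem_Icc]
            omega
          have hcard : (Finset.Icc (3*(M:ℤ)+1) (4*(M:ℤ))).card = M := by
            rw [Int.card_Icc]; omega
          rw [hfe, Finset.sum_const, hcard, nsmul_eq_mul]
          ring
  have hneg_sum : ∑ τ ∈ Finset.Icc (1-(L:ℤ)) (-1), g τ
      = ∑ τ ∈ Finset.Icc (1:ℤ) ((L:ℤ)-1), g τ :=
    Finset.sum_nbij' (i := fun τ => -τ) (j := fun τ => -τ)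
      (fun τ hτ => by simp only [Finset.mem_Icc] at *; omega)
      (fun τ hτ => by simp only [Finset.mem_Icc] at *; omega)
      (fun τ _ => neg_neg τ) (fun τ _ => neg_neg τ)
      (fun τ _ => (gsymm τ).symm)
  have total : ∑ τ ∈ Finset.Icc (1-(L:ℤ)) ((L:ℤ)-1), g τ ≤ 4*(L:ℝ) - 4 := by
    have hsplit : Finset.Icc (1-(L:ℤ)) ((L:ℤ)-1)
        = Finset.Icc (1-(L:ℤ)) (-1) ∪ insert 0 (Finset.Icc (1:ℤ) ((L:ℤ)-1)) := by
      ext τ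
      simp only [Finset.mem_union, Finset.mem_Icc, Finset.mem_insert]
      omega
    have hdisj : Disjoint (Finset.Icc (1-(L:ℤ)) (-1)) (insert 0 (Finset.Icc (1:ℤ) ((L:ℤ)-1))) := by
      rw [Finset.disjoint_left]
      intro τ h1 h2
      simp only [Finset.mem_Icc] at h1
      simp only [Finset.mem_insert, Finset.mem_Icc] at h2
      omega
    rw [hsplit, Finset.sum_union hdisj, Finset.sum_insert (by simp), hneg_sum, g0]
    have hLr : (L:ℝ) = 4*M+2 := by rw [hL, hM]; push_cast; ring
    rw [hLr]
    push_cast at hpos_sum ⊢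
    linarith
  have key : ∀ (c : ℕ → ℂ), (c = a ∨ c = b) → ∀ t : ℝ,
      ‖∑ i ∈ Finset.range L, c i * E t i‖ ^ 2 ≤ 4*(L:ℝ) - 4 := by
    intro c hc t
    set fa := ∑ i ∈ Finset.range L, a i * E t i with hfa
    set fb := ∑ i ∈ Finset.range L, b i * E t i with hfb
    have hS : fa * star fa + fb * star fb
        = ∑ τ ∈ Finset.Icc (1-(L:ℤ)) ((L:ℤ)-1), (rho L a τ + rho L b τ) * E t (-τ) := by
      rw [hfa, hfb, decomp, decomp, ← Finset.sum_add_distrib]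
      exact Finset.sum_congr rfl fun τ _ => by ring
    have habs : ‖fa‖ ^ 2 + ‖fb‖ ^ 2 ≤ 4*(L:ℝ) - 4 := by
      have hre : ‖fa‖ ^ 2 + ‖fb‖ ^ 2 = (fa * star fa + fb * star fb).re := by
        rw [show star fa = (starRingEnd ℂ) fa from rfl, show star fb = (starRingEnd ℂ) fb from rfl,
          Complex.mul_conj, Complex.mul_conj, Complex.add_re, Complex.ofReal_re,
          Complex.ofReal_re, Complex.normSq_eq_norm_sq, Complex.normSq_eq_norm_sq]
      rw [hre, hS]
      calc (∑ τ ∈ Finset.Icc (1-(L:ℤ)) ((L:ℤ)-1), (rho L a τ + rho L b τ) * E t (-τ)).re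
          ≤ ‖∑ τ ∈ Finset.Icc (1-(L:ℤ)) ((L:ℤ)-1),
              (rho L a τ + rho L b τ) * E t (-τ)‖ := Complex.re_le_norm _
        _ ≤ ∑ τ ∈ Finset.Icc (1-(L:ℤ)) ((L:ℤ)-1),
              ‖(rho L a τ + rho L b τ) * E t (-τ)‖ := norm_sum_le _ _
        _ = ∑ τ ∈ Finset.Icc (1-(L:ℤ)) ((L:ℤ)-1), g τ := by
            refine Finset.sum_congr rfl fun τ _ => ?_
            simp only [hg, norm_mul, E_abs, mul_one, acorr_eq]
        _ ≤ 4*(L:ℝ) - 4 := total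
    rcases hc with rfl | rfl
    · have := sq_nonneg ‖fb‖; linarith
    · have := sq_nonneg ‖fa‖; linarith
  have pm : ∀ (c : ℕ → ℂ),
      (∀ t : ℝ, ‖∑ i ∈ Finset.range L, c i * E t i‖ ^ 2 ≤ 4*(L:ℝ) - 4) →
      pmepr L c < 4 := by
    intro c hc
    haveI : Nonempty (Set.Icc (0:ℝ) 1) := ⟨⟨0, by constructor <;> norm_num⟩⟩
    have hLr : (1:ℝ) ≤ L := by exact_mod_cast hLpos
    have h1 : pmepr L c ≤ (4*(L:ℝ) - 4)/L := by
      apply ciSup_le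
      rintro ⟨t, ht⟩
      have h2 := hc t
      simp only [E, Int.cast_natCast] at h2
      have : (0:ℝ) ≤ (L:ℝ) := by linarith
      exact div_le_div_of_nonneg_right h2 (by linarith) |>.trans_eq rfl
    have h2 : (4*(L:ℝ) - 4)/L < 4 := by
      rw [div_lt_iff₀ (by linarith)]
      nlinarith
    linarith
  intro j hj
  have hNj : N - 1 - j < N := by omega
  refine ⟨?_, ?_, ?_, ?_⟩
  · apply pm
    intro t
    have hs : (∑ i ∈ Finset.range L, (a i * x j) * E t i)
        = x j * ∑ i ∈ Finset.range L, a i * E t i := by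
      rw [Finset.mul_sum]; exact Finset.sum_congr rfl fun i _ => by ring
    rw [hs, norm_mul, hx j hj, one_mul]
    exact key a (Or.inl rfl) t
  · apply pm
    intro t
    have hs : (∑ i ∈ Finset.range L, (b i * y j) * E t i)
        = y j * ∑ i ∈ Finset.range L, b i * E t i := by
      rw [Finset.mul_sum]; exact Finset.sum_congr rfl fun i _ => by ring
    rw [hs, norm_mul, hy j hj, one_mul]
    exact key b (Or.inr rfl) t
  · apply pm
    intro t
    have hs : (∑ i ∈ Finset.range L, (-(a i * star (y (N - 1 - j)))) * E t i)
        = (-(star (y (N - 1 - j)))) * ∑ i ∈ Finset.range L, a i * E t i := by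
      rw [Finset.mul_sum]; exact Finset.sum_congr rfl fun i _ => by ring
    have habs1 : ‖-(star (y (N - 1 - j)))‖ = 1 := by
      rw [norm_neg,
        show star (y (N-1-j)) = (starRingEnd ℂ) (y (N-1-j)) from rfl, Complex.norm_conj]
      exact hy _ hNj
    rw [hs, norm_mul, habs1, one_mul]
    exact key a (Or.inl rfl) t
  · apply pm
    intro t
    have hs : (∑ i ∈ Finset.range L, (b i * star (x (N - 1 - j))) * E t i)
        = (star (x (N - 1 - j))) * ∑ i ∈ Finset.range L, b i * E t i := by
      rw [Finset.mul_sum]; exact Finset.sum_congr rfl fun i _ => by ring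
    have habs1 : ‖star (x (N - 1 - j))‖ = 1 := by
      rw [show star (x (N-1-j)) = (starRingEnd ℂ) (x (N-1-j)) from rfl, Complex.norm_conj]
      exact hx _ hNj
    rw [hs, norm_mul, habs1, one_mul]
    exact key b (Or.inr rfl) t


end
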